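/- Set p(r) := Δ_-(r)/(r²+a²). Let W:(r_+,∞)→ℝ be continuous with W ≥ 0, and let u:(r_+,∞)→ℂ be twice continuously differentiable and satisfy d/dr( p(r)·u'(r) ) = W(r)·u(r)/p(r) on (r_+,∞). If Re( p(r)·u'(r)·conj(u(r)) ) → 0 both as r→r_+⁺ and as r→∞, and u(r)→0 as r→∞, then u ≡ 0. -/
import Mathlib


open Set Filter

theorem stmt_16 (ℓ M a rp : ℝ) (hℓ : 0 < ℓ) (hM : 0 < M) (ha : |a| < ℓ) (hrp : 0 < rp)
    (Δ : ℝ → ℝ) (hΔ : ∀ r, Δ r = (r ^ 2 + a ^ 2) * (1 + r ^ 2 / ℓ ^ 2) - 2 * M * r)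
    (hroot : Δ rp = 0) (hmax : ∀ r, Δ r = 0 → r ≤ rp) (hd : 0 < deriv Δ rp)
    (p : ℝ → ℝ) (hp : ∀ r, p r = Δ r / (r ^ 2 + a ^ 2))
    (W : ℝ → ℝ) (hWcont : ContinuousOn W (Ioi rp)) (hW : ∀ r ∈ Ioi rp, 0 ≤ W r)
    (u : ℝ → ℂ) (hu : ContDiffOn ℝ 2 u (Ioi rp))
    (hODE : ∀ r ∈ Ioi rp,
      deriv (fun s : ℝ => ((p s : ℝ) : ℂ) * deriv u s) r = ((W r / p r : ℝ) : ℂ) * u r)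
    (hfluxH : Tendsto (fun r : ℝ => p r * (deriv u r * (starRingEnd ℂ) (u r)).re)
      (nhdsWithin rp (Ioi rp)) (nhds 0))
    (hfluxI : Tendsto (fun r : ℝ => p r * (deriv u r * (starRingEnd ℂ) (u r)).re)
      atTop (nhds 0))
    (hdecay : Tendsto u atTop (nhds 0)) :
    ∀ r ∈ Ioi rp, u r = 0 := by
  -- Δ is continuous
  have hΔfun : Δ = fun r : ℝ => (r ^ 2 + a ^ 2) * (1 + r ^ 2 / ℓ ^ 2) - 2 * M * r :=
    funext hΔ
  have hΔcont : Continuous Δ := by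
    rw [hΔfun]; fun_prop
  -- Δ positive on Ioi rp
  have hΔpos : ∀ r ∈ Ioi rp, 0 < Δ r := by
    intro r hr
    rcases lt_trichotomy (Δ r) 0 with hneg | hz | hpos
    · exfalso
      set R := max (r + 1) (2 * M + 1) with hR
      have hrR : r < R := lt_of_lt_of_le (by linarith) (le_max_left _ _)
      have hR2M : 2 * M + 1 ≤ R := le_max_right _ _
      have hRpos : 0 < R := by
        have : (0:ℝ) < 2 * M + 1 := by linarith
        linarith
      have hΔR : 0 < Δ R := by
        rw [hΔ]
        have h1 : R ^ 2 ≤ (R ^ 2 + a ^ 2) * (1 + R ^ 2 / ℓ ^ 2) := by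
          have ha2 : 0 ≤ a ^ 2 := sq_nonneg a
          have hl2 : 0 ≤ R ^ 2 / ℓ ^ 2 := by positivity
          nlinarith [sq_nonneg R, mul_nonneg ha2 hl2]
        have h2 : 2 * M * R < R ^ 2 := by nlinarith
        linarith
      have : (0:ℝ) ∈ Ioo (Δ r) (Δ R) := ⟨hneg, hΔR⟩
      obtain ⟨c, hc, hc0⟩ := intermediate_value_Ioo hrR.le (hΔcont.continuousOn) this
      have := hmax c hc0
      have : rp < c := lt_trans hr hc.1
      linarith [hmax c hc0]
    · exact absurd (hmax r hz) (not_le.mpr hr)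
    · exact hpos
  -- p positive on Ioi rp
  have hrpos : ∀ r ∈ Ioi rp, (0:ℝ) < r := fun r hr => lt_trans hrp hr
  have hden : ∀ r ∈ Ioi rp, (0:ℝ) < r ^ 2 + a ^ 2 := by
    intro r hr
    have := hrpos r hr
    positivity
  have hppos : ∀ r ∈ Ioi rp, 0 < p r := by
    intro r hr
    rw [hp]
    exact div_pos (hΔpos r hr) (hden r hr)
  -- p is differentiable on Ioi rp
  have hpdiff : ∀ r ∈ Ioi rp, DifferentiableAt ℝ p r := by
    intro r hr
    have hpfun : p = fun s : ℝ => Δ s / (s ^ 2 + a ^ 2) := funext hp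
    rw [hpfun, hΔfun]
    apply DifferentiableAt.div
    · fun_prop
    · fun_prop
    · exact ne_of_gt (hden r hr)
  have hIoi : IsOpen (Ioi rp) := isOpen_Ioi
  -- u and deriv u are differentiable at points of Ioi rp
  have hudiff : ∀ r ∈ Ioi rp, DifferentiableAt ℝ u r := by
    intro r hr
    exact (hu.differentiableOn (by norm_num)).differentiableAt (hIoi.mem_nhds hr)
  have hdu : ContDiffOn ℝ 1 (deriv u) (Ioi rp) :=
    hu.deriv_of_isOpen hIoi (by norm_num)
  have hdudiff : ∀ r ∈ Ioi rp, DifferentiableAt ℝ (deriv u) r := by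
    intro r hr
    exact (hdu.differentiableOn (by norm_num)).differentiableAt (hIoi.mem_nhds hr)
  -- The flux function F and its derivative Q
  set F : ℝ → ℝ := fun s => p s * (deriv u s * (starRingEnd ℂ) (u s)).re with hFdef
  set Q : ℝ → ℝ := fun s => W s / p s * Complex.normSq (u s)
      + p s * Complex.normSq (deriv u s) with hQdef
  have hFeq : ∀ s : ℝ, F s = ((((p s : ℝ) : ℂ) * deriv u s) * (starRingEnd ℂ) (u s)).re := by
    intro s
    simp [hFdef, mul_assoc, Complex.mul_re]
  have hF' : ∀ r ∈ Ioi rp, HasDerivAt F (Q r) r := by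
    intro r hr
    have hu' : HasDerivAt u (deriv u r) r := (hudiff r hr).hasDerivAt
    -- g = p·u'
    have hgdiff : DifferentiableAt ℝ (fun s : ℝ => ((p s : ℝ) : ℂ) * deriv u s) r := by
      apply DifferentiableAt.mul
      · exact Complex.ofRealCLM.differentiable.differentiableAt.comp r (hpdiff r hr)
      · exact hdudiff r hr
    have hg : HasDerivAt (fun s : ℝ => ((p s : ℝ) : ℂ) * deriv u s)
        (((W r / p r : ℝ) : ℂ) * u r) r := by
      have h := hgdiff.hasDerivAt
      rwa [hODE r hr] at h
    have hstar : HasDerivAt (fun s : ℝ => (starRingEnd ℂ) (u s))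
        ((starRingEnd ℂ) (deriv u r)) r := hu'.star
    have hprod := hg.mul hstar
    have hre := Complex.reCLM.hasFDerivAt.comp_hasDerivAt r hprod
    have hval : Complex.reCLM
        (((W r / p r : ℝ) : ℂ) * u r * (starRingEnd ℂ) (u r)
          + ((p r : ℝ) : ℂ) * deriv u r * (starRingEnd ℂ) (deriv u r)) = Q r := by
      rw [mul_assoc, mul_assoc, Complex.mul_conj, Complex.mul_conj]
      simp [hQdef]
    rw [hval] at hre
    have hfun : F = Complex.reCLM ∘ (fun s : ℝ =>
        (((p s : ℝ) : ℂ) * deriv u s) * (starRingEnd ℂ) (u s)) := by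
      funext s
      simp [hFeq s, Function.comp]
    rw [hfun]
    exact hre
  -- Q is nonnegative on Ioi rp
  have hQnonneg : ∀ r ∈ Ioi rp, 0 ≤ Q r := by
    intro r hr
    have h1 : 0 ≤ W r / p r := div_nonneg (hW r hr) (hppos r hr).le
    have h2 : 0 ≤ p r := (hppos r hr).le
    have := Complex.normSq_nonneg (u r)
    have := Complex.normSq_nonneg (deriv u r)
    positivity
  -- F is monotone on Ioi rp
  have hFdiff : ∀ r ∈ Ioi rp, DifferentiableAt ℝ F r :=
    fun r hr => (hF' r hr).differentiableAt
  have hFmono : MonotoneOn F (Ioi rp) := by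
    apply monotoneOn_of_deriv_nonneg (convex_Ioi rp)
    · exact fun r hr => (hFdiff r hr).continuousAt.continuousWithinAt
    · rw [interior_Ioi]
      exact fun r hr => (hFdiff r hr).differentiableWithinAt
    · rw [interior_Ioi]
      intro r hr
      rw [(hF' r hr).deriv]
      exact hQnonneg r hr
  -- F vanishes on Ioi rp
  have hF0 : ∀ r ∈ Ioi rp, F r = 0 := by
    intro r hr
    have hle : F r ≤ 0 := by
      apply ge_of_tendsto hfluxI
      filter_upwards [eventually_ge_atTop r] with s hs
      exact hFmono hr (lt_of_lt_of_le hr hs) hs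
    have hge : 0 ≤ F r := by
      apply le_of_tendsto hfluxH
      have h1 : Iio r ∈ nhdsWithin rp (Ioi rp) :=
        nhdsWithin_le_nhds (Iio_mem_nhds hr)
      filter_upwards [h1, self_mem_nhdsWithin] with s hs1 hs2
      exact hFmono hs2 hr (le_of_lt hs1)
    linarith
  -- hence deriv F = 0, so Q = 0 on Ioi rp
  have hQ0 : ∀ r ∈ Ioi rp, Q r = 0 := by
    intro r hr
    have hev : F =ᶠ[nhds r] (fun _ => (0:ℝ)) := by
      filter_upwards [hIoi.mem_nhds hr] with s hs
      exact hF0 s hs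
    have := hev.deriv_eq
    rw [(hF' r hr).deriv] at this
    rw [this, deriv_const]
  -- deriv u = 0 on Ioi rp
  have hderiv0 : ∀ r ∈ Ioi rp, deriv u r = 0 := by
    intro r hr
    have hQr := hQ0 r hr
    have h1 : 0 ≤ W r / p r * Complex.normSq (u r) := by
      have := Complex.normSq_nonneg (u r)
      have := div_nonneg (hW r hr) (hppos r hr).le
      positivity
    have h2 : 0 ≤ p r * Complex.normSq (deriv u r) := by
      have := Complex.normSq_nonneg (deriv u r)
      have := (hppos r hr).le
      positivity
    have h3 : p r * Complex.normSq (deriv u r) = 0 := by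
      simp only [hQdef] at hQr
      linarith
    have h4 : Complex.normSq (deriv u r) = 0 := by
      rcases mul_eq_zero.mp h3 with h | h
      · exact absurd h (ne_of_gt (hppos r hr))
      · exact h
    exact Complex.normSq_eq_zero.mp h4
  -- u is constant on Ioi rp
  have hconst : ∀ r ∈ Ioi rp, ∀ s ∈ Ioi rp, u s = u r := by
    intro r hr s hs
    have hb := Convex.norm_image_sub_le_of_norm_deriv_le (f := u) (s := Ioi rp) (C := 0)
      hudiff (fun x hx => by rw [hderiv0 x hx]; simp) (convex_Ioi rp) hr hs
    have : ‖u s - u r‖ ≤ 0 := by simpa using hb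
    have : ‖u s - u r‖ = 0 := le_antisymm this (norm_nonneg _)
    exact sub_eq_zero.mp (norm_eq_zero.mp this)
  intro r hr
  have hconst' : ∀ s ∈ Ioi rp, u s = u r := hconst r hr
  have htend : Tendsto u atTop (nhds (u r)) := by
    apply Tendsto.congr' _ tendsto_const_nhds
    filter_upwards [eventually_gt_atTop rp] with s hs
    exact (hconst' s hs).symm
  exact (tendsto_nhds_unique hdecay htend).symm
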